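/- Let S be a measurable subset of the Euclidean plane with 0 < μ(S) < ∞, let a, b ∈ ℝ², and let r > 0 be such that the open r-thickening of the segment [a, b] is contained in S. Let N be a positive natural number and consider N obstacle centers drawn i.i.d. from the uniform probability distribution on S (the N-fold product of the normalized restriction of Lebesgue measure to S). Then the probability that every one of the N centers is at distance at least r from the segment [a, b] equals ((μ(S) − π r² − 2 r ‖a − b‖) / μ(S))^N. -/

import Mathlib

open MeasureTheory Real
open scoped ENNReal

section ClearanceAux

lemma clearance_psi_mp :
    MeasurePreserving (fun x : EuclideanSpace ℝ (Fin 2) => (x 0, x 1)) volume volume :=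
  (volume_preserving_piFinTwo (fun _ => ℝ)).comp
    (EuclideanSpace.volume_preserving_symm_measurableEquiv_toLp (Fin 2))

lemma clearance_volume_ball {r : ℝ} (hr : 0 < r) (c : EuclideanSpace ℝ (Fin 2)) :
    volume (Metric.ball c r) = ENNReal.ofReal (π * r ^ 2) := by
  rw [EuclideanSpace.volume_ball]
  simp only [Fintype.card_fin]
  rw [show ((2:ℕ):ℝ)/2 + 1 = 2 by norm_num, Real.Gamma_two, sq_sqrt pi_pos.le]
  rw [div_one, ← ENNReal.ofReal_pow hr.le, ← ENNReal.ofReal_mul (by positivity), mul_comm]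

lemma clearance_volume_disc {r : ℝ} (hr : 0 < r) :
    volume {p : ℝ × ℝ | p.1 ^ 2 + p.2 ^ 2 < r ^ 2} = ENNReal.ofReal (π * r ^ 2) := by
  have hm : MeasurableSet {p : ℝ × ℝ | p.1 ^ 2 + p.2 ^ 2 < r ^ 2} := by
    have : IsOpen {p : ℝ × ℝ | p.1 ^ 2 + p.2 ^ 2 < r ^ 2} :=
      isOpen_lt ((continuous_fst.pow 2).add (continuous_snd.pow 2)) continuous_const
    exact this.measurableSet
  have h := clearance_psi_mp.measure_preimage hm.nullMeasurableSet
  have hset : (fun x : EuclideanSpace ℝ (Fin 2) => (x 0, x 1)) ⁻¹'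
      {p : ℝ × ℝ | p.1 ^ 2 + p.2 ^ 2 < r ^ 2} = Metric.ball 0 r := by
    ext x
    simp only [Set.mem_preimage, Set.mem_setOf_eq, Metric.mem_ball, dist_zero_right,
      EuclideanSpace.norm_eq, Fin.sum_univ_two, Real.norm_eq_abs, sq_abs]
    rw [show Real.sqrt (x 0 ^ 2 + x 1 ^ 2) < r ↔ x 0 ^ 2 + x 1 ^ 2 < r ^ 2 from
      Real.sqrt_lt' hr]
  rw [hset] at h
  rw [← h, clearance_volume_ball hr]

lemma clearance_hm_neg (r : ℝ) :
    MeasurableSet {p : ℝ × ℝ | p.1 < 0 ∧ p.1 ^ 2 + p.2 ^ 2 < r ^ 2} := by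
  have : IsOpen {p : ℝ × ℝ | p.1 < 0 ∧ p.1 ^ 2 + p.2 ^ 2 < r ^ 2} :=
    (isOpen_lt continuous_fst continuous_const).inter
      (isOpen_lt ((continuous_fst.pow 2).add (continuous_snd.pow 2)) continuous_const)
  exact this.measurableSet

lemma clearance_hm_pos (r : ℝ) :
    MeasurableSet {p : ℝ × ℝ | 0 < p.1 ∧ p.1 ^ 2 + p.2 ^ 2 < r ^ 2} := by
  have : IsOpen {p : ℝ × ℝ | 0 < p.1 ∧ p.1 ^ 2 + p.2 ^ 2 < r ^ 2} :=
    (isOpen_lt continuous_const continuous_fst).inter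
      (isOpen_lt ((continuous_fst.pow 2).add (continuous_snd.pow 2)) continuous_const)
  exact this.measurableSet

lemma clearance_negfst_mp : MeasurePreserving (fun p : ℝ × ℝ => (-p.1, p.2)) volume volume := by
  rw [show (volume : Measure (ℝ × ℝ)) = (volume : Measure ℝ).prod volume from rfl]
  exact (Measure.measurePreserving_neg (volume : Measure ℝ)).prod (MeasurePreserving.id _)

lemma clearance_addfst_mp (L : ℝ) :
    MeasurePreserving (fun p : ℝ × ℝ => (p.1 + L, p.2)) volume volume := by
  rw [show (volume : Measure (ℝ × ℝ)) = (volume : Measure ℝ).prod volume from rfl]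
  exact (measurePreserving_add_right (volume : Measure ℝ) L).prod (MeasurePreserving.id _)

lemma clearance_pos_eq_neg_half (r : ℝ) :
    volume {p : ℝ × ℝ | 0 < p.1 ∧ p.1 ^ 2 + p.2 ^ 2 < r ^ 2}
      = volume {p : ℝ × ℝ | p.1 < 0 ∧ p.1 ^ 2 + p.2 ^ 2 < r ^ 2} := by
  have h := clearance_negfst_mp.measure_preimage (clearance_hm_neg r).nullMeasurableSet
  have hset : (fun p : ℝ × ℝ => (-p.1, p.2)) ⁻¹'
      {p : ℝ × ℝ | p.1 < 0 ∧ p.1 ^ 2 + p.2 ^ 2 < r ^ 2}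
      = {p : ℝ × ℝ | 0 < p.1 ∧ p.1 ^ 2 + p.2 ^ 2 < r ^ 2} := by
    ext p; simp only [Set.mem_preimage, Set.mem_setOf_eq, neg_lt_zero, neg_sq]
  rw [hset] at h; exact h

lemma clearance_volume_half_disc {r : ℝ} (hr : 0 < r) :
    volume {p : ℝ × ℝ | p.1 < 0 ∧ p.1 ^ 2 + p.2 ^ 2 < r ^ 2}
      = ENNReal.ofReal (π * r ^ 2 / 2) := by
  set Dm := {p : ℝ × ℝ | p.1 < 0 ∧ p.1 ^ 2 + p.2 ^ 2 < r ^ 2} with hDm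
  set Dp := {p : ℝ × ℝ | 0 < p.1 ∧ p.1 ^ 2 + p.2 ^ 2 < r ^ 2} with hDp
  set D := {p : ℝ × ℝ | p.1 ^ 2 + p.2 ^ 2 < r ^ 2} with hD
  have hzero : volume (({(0:ℝ)} : Set ℝ) ×ˢ (Set.univ : Set ℝ)) = 0 := by
    rw [show (volume : Measure (ℝ × ℝ)) = (volume : Measure ℝ).prod volume from rfl,
      Measure.prod_prod, Real.volume_singleton, zero_mul]
  have hdisj : Disjoint Dm Dp := by
    rw [Set.disjoint_left]; rintro p ⟨h1, -⟩ ⟨h2, -⟩; exact absurd (h1.trans h2) (lt_irrefl _)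
  have hsub : D ⊆ (Dm ∪ Dp) ∪ ({(0:ℝ)} : Set ℝ) ×ˢ (Set.univ : Set ℝ) := by
    intro p hp
    rcases lt_trichotomy p.1 0 with h | h | h
    · exact Or.inl (Or.inl ⟨h, hp⟩)
    · exact Or.inr ⟨h, Set.mem_univ _⟩
    · exact Or.inl (Or.inr ⟨h, hp⟩)
  have h1 : volume D = volume Dm + volume Dp := by
    apply le_antisymm
    · calc volume D ≤ volume ((Dm ∪ Dp) ∪ ({(0:ℝ)} : Set ℝ) ×ˢ (Set.univ : Set ℝ)) :=
          measure_mono hsub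
        _ ≤ volume (Dm ∪ Dp) + volume (({(0:ℝ)} : Set ℝ) ×ˢ (Set.univ : Set ℝ)) :=
          measure_union_le _ _
        _ = volume (Dm ∪ Dp) := by rw [hzero, add_zero]
        _ = volume Dm + volume Dp := measure_union hdisj (clearance_hm_pos r)
    · rw [← measure_union hdisj (clearance_hm_pos r)]
      exact measure_mono (Set.union_subset (fun p hp => hp.2) (fun p hp => hp.2))
  rw [clearance_volume_disc hr, clearance_pos_eq_neg_half, ← two_mul] at h1
  have h2 : ENNReal.ofReal (π * r ^ 2) = 2 * ENNReal.ofReal (π * r ^ 2 / 2) := by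
    rw [← ENNReal.ofReal_ofNat, ← ENNReal.ofReal_mul (by norm_num)]
    congr 1; ring
  rw [h2] at h1
  exact (ENNReal.mul_right_inj (by norm_num) (by norm_num)).mp h1.symm

lemma clearance_hm_A3 (r L : ℝ) :
    MeasurableSet {p : ℝ × ℝ | L < p.1 ∧ (p.1 - L) ^ 2 + p.2 ^ 2 < r ^ 2} := by
  have : IsOpen {p : ℝ × ℝ | L < p.1 ∧ (p.1 - L) ^ 2 + p.2 ^ 2 < r ^ 2} :=
    (isOpen_lt continuous_const continuous_fst).inter
      (isOpen_lt (((continuous_fst.sub continuous_const).pow 2).add (continuous_snd.pow 2))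
        continuous_const)
  exact this.measurableSet

lemma clearance_volume_A3 {r : ℝ} (hr : 0 < r) (L : ℝ) :
    volume {p : ℝ × ℝ | L < p.1 ∧ (p.1 - L) ^ 2 + p.2 ^ 2 < r ^ 2}
      = ENNReal.ofReal (π * r ^ 2 / 2) := by
  have h := (clearance_addfst_mp L).measure_preimage (clearance_hm_A3 r L).nullMeasurableSet
  have hset : (fun p : ℝ × ℝ => (p.1 + L, p.2)) ⁻¹'
      {p : ℝ × ℝ | L < p.1 ∧ (p.1 - L) ^ 2 + p.2 ^ 2 < r ^ 2}
      = {p : ℝ × ℝ | 0 < p.1 ∧ p.1 ^ 2 + p.2 ^ 2 < r ^ 2} := by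
    ext p
    simp only [Set.mem_preimage, Set.mem_setOf_eq, add_sub_cancel_right, lt_add_iff_pos_left]
  rw [hset, clearance_pos_eq_neg_half, clearance_volume_half_disc hr] at h
  exact h.symm

lemma clearance_stadium_decomp {r L : ℝ} (hr : 0 < r) (hL : 0 ≤ L) :
    {p : ℝ × ℝ | ∃ s ∈ Set.Icc (0:ℝ) L, (p.1 - s) ^ 2 + p.2 ^ 2 < r ^ 2}
      = {p : ℝ × ℝ | p.1 < 0 ∧ p.1 ^ 2 + p.2 ^ 2 < r ^ 2}
        ∪ (Set.Icc 0 L ×ˢ Set.Ioo (-r) r)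
        ∪ {p : ℝ × ℝ | L < p.1 ∧ (p.1 - L) ^ 2 + p.2 ^ 2 < r ^ 2} := by
  ext ⟨x, y⟩
  simp only [Set.mem_setOf_eq, Set.mem_union, Set.mem_prod, Set.mem_Icc, Set.mem_Ioo]
  constructor
  · rintro ⟨s, ⟨hs0, hsL⟩, hlt⟩
    rcases lt_trichotomy x 0 with h | h | h
    · refine Or.inl (Or.inl ⟨h, lt_of_le_of_lt (add_le_add_left ?_ _) hlt⟩)
      have : |x| ≤ |x - s| := by
        rw [abs_of_neg h, abs_of_nonpos (by linarith)]; linarith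
      calc x ^ 2 = |x| ^ 2 := (sq_abs x).symm
        _ ≤ |x - s| ^ 2 := by gcongr
        _ = (x - s) ^ 2 := sq_abs _
    all_goals rcases le_or_gt x L with hxL | hxL
    · refine Or.inl (Or.inr ⟨⟨by linarith, hxL⟩, ?_⟩)
      have hy2 : y ^ 2 < r ^ 2 := lt_of_le_of_lt (le_add_of_nonneg_left (sq_nonneg _)) hlt
      constructor
      · nlinarith [sq_abs y, abs_nonneg y, neg_abs_le y]
      · nlinarith [sq_abs y, abs_nonneg y, le_abs_self y]
    · refine Or.inr ⟨hxL, lt_of_le_of_lt (add_le_add_left ?_ _) hlt⟩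
      have : |x - L| ≤ |x - s| := by
        rw [abs_of_nonneg (by linarith), abs_of_nonneg (by linarith)]; linarith
      calc (x - L) ^ 2 = |x - L| ^ 2 := (sq_abs _).symm
        _ ≤ |x - s| ^ 2 := by gcongr
        _ = (x - s) ^ 2 := sq_abs _
    · refine Or.inl (Or.inr ⟨⟨by linarith, hxL⟩, ?_⟩)
      have hy2 : y ^ 2 < r ^ 2 := lt_of_le_of_lt (le_add_of_nonneg_left (sq_nonneg _)) hlt
      constructor
      · nlinarith [sq_abs y, abs_nonneg y, neg_abs_le y]
      · nlinarith [sq_abs y, abs_nonneg y, le_abs_self y]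
    · refine Or.inr ⟨hxL, lt_of_le_of_lt (add_le_add_left ?_ _) hlt⟩
      have : |x - L| ≤ |x - s| := by
        rw [abs_of_nonneg (by linarith), abs_of_nonneg (by linarith)]; linarith
      calc (x - L) ^ 2 = |x - L| ^ 2 := (sq_abs _).symm
        _ ≤ |x - s| ^ 2 := by gcongr
        _ = (x - s) ^ 2 := sq_abs _
  · rintro ((⟨hx, hlt⟩ | ⟨⟨hx0, hxL⟩, hy1, hy2⟩) | ⟨hx, hlt⟩)
    · exact ⟨0, ⟨le_refl _, hL⟩, by simpa using hlt⟩
    · refine ⟨x, ⟨hx0, hxL⟩, ?_⟩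
      have : y ^ 2 < r ^ 2 := by nlinarith [abs_lt.mpr ⟨hy1, hy2⟩, sq_abs y, abs_nonneg y]
      simpa using this
    · exact ⟨L, ⟨hL, le_refl _⟩, hlt⟩

lemma clearance_hm_stadium (r L : ℝ) :
    MeasurableSet {p : ℝ × ℝ | ∃ s ∈ Set.Icc (0:ℝ) L, (p.1 - s) ^ 2 + p.2 ^ 2 < r ^ 2} := by
  have : {p : ℝ × ℝ | ∃ s ∈ Set.Icc (0:ℝ) L, (p.1 - s) ^ 2 + p.2 ^ 2 < r ^ 2}
      = ⋃ s ∈ Set.Icc (0:ℝ) L, {p : ℝ × ℝ | (p.1 - s) ^ 2 + p.2 ^ 2 < r ^ 2} := by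
    ext p; simp [Set.mem_iUnion]
  rw [this]
  exact (isOpen_biUnion fun s _ =>
    isOpen_lt (((continuous_fst.sub continuous_const).pow 2).add (continuous_snd.pow 2))
      continuous_const).measurableSet

lemma clearance_volume_stadium {r L : ℝ} (hr : 0 < r) (hL : 0 ≤ L) :
    volume {p : ℝ × ℝ | ∃ s ∈ Set.Icc (0:ℝ) L, (p.1 - s) ^ 2 + p.2 ^ 2 < r ^ 2}
      = ENNReal.ofReal (π * r ^ 2 + 2 * r * L) := by
  rw [clearance_stadium_decomp hr hL]
  have hd1 : Disjoint ({p : ℝ × ℝ | p.1 < 0 ∧ p.1 ^ 2 + p.2 ^ 2 < r ^ 2}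
      ∪ (Set.Icc 0 L ×ˢ Set.Ioo (-r) r))
      {p : ℝ × ℝ | L < p.1 ∧ (p.1 - L) ^ 2 + p.2 ^ 2 < r ^ 2} := by
    rw [Set.disjoint_left]
    rintro p (⟨h1, -⟩ | ⟨⟨-, h1⟩, -⟩) ⟨h2, -⟩
    · exact absurd (h1.trans (hL.trans_lt h2)) (lt_irrefl _)
    · exact absurd (h1.trans_lt h2) (lt_irrefl _)
  have hd2 : Disjoint {p : ℝ × ℝ | p.1 < 0 ∧ p.1 ^ 2 + p.2 ^ 2 < r ^ 2}
      (Set.Icc 0 L ×ˢ Set.Ioo (-r) r) := by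
    rw [Set.disjoint_left]
    rintro p ⟨h1, -⟩ ⟨⟨h2, -⟩, -⟩
    exact absurd (h1.trans_le h2) (lt_irrefl _)
  rw [measure_union hd1 (clearance_hm_A3 r L), measure_union hd2
    (measurableSet_Icc.prod measurableSet_Ioo)]
  rw [clearance_volume_half_disc hr, clearance_volume_A3 hr L]
  have hrect : volume (Set.Icc (0:ℝ) L ×ˢ Set.Ioo (-r) r) = ENNReal.ofReal (2 * r * L) := by
    rw [show (volume : Measure (ℝ × ℝ)) = (volume : Measure ℝ).prod volume from rfl,
      Measure.prod_prod, Real.volume_Icc, Real.volume_Ioo,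
      ← ENNReal.ofReal_mul (by linarith)]
    congr 1; ring
  rw [hrect, ← ENNReal.ofReal_add (by positivity) (by positivity),
    ← ENNReal.ofReal_add (by positivity) (by positivity)]
  congr 1; ring

lemma clearance_volume_thickening_segment (a b : EuclideanSpace ℝ (Fin 2)) {r : ℝ} (hr : 0 < r) :
    volume (Metric.thickening r (segment ℝ a b))
      = ENNReal.ofReal (π * r ^ 2 + 2 * r * ‖b - a‖) := by
  by_cases hab : b = a
  · subst hab
    rw [segment_same, Metric.thickening_singleton, sub_self, norm_zero, mul_zero, add_zero]
    exact clearance_volume_ball hr b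
  · set L : ℝ := ‖b - a‖ with hLdef
    have hL : 0 < L := by simpa [hLdef] using sub_ne_zero_of_ne hab
    set u : EuclideanSpace ℝ (Fin 2) := L⁻¹ • (b - a) with hu
    have hunorm : ‖u‖ = 1 := by
      rw [hu, norm_smul, norm_inv, Real.norm_eq_abs, abs_of_pos hL, ← hLdef,
        inv_mul_cancel₀ hL.ne']
    have horth : Orthonormal ℝ (({0} : Set (Fin 2)).restrict (fun _ => u)) := by
      rw [orthonormal_iff_ite]
      intro i j
      have : i = j := Subsingleton.elim i j
      subst this
      rw [if_pos rfl, real_inner_self_eq_norm_sq]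
      show ‖u‖ ^ 2 = 1
      rw [hunorm]; norm_num
    obtain ⟨B, hB⟩ := horth.exists_orthonormalBasis_extension_of_card_eq
      (by simp [finrank_euclideanSpace])
    have hB0 : B 0 = u := hB 0 rfl
    set Φ : EuclideanSpace ℝ (Fin 2) → ℝ × ℝ :=
      fun x => (B.repr (x - a) 0, B.repr (x - a) 1) with hΦ
    have mpΦ : MeasurePreserving Φ volume volume := by
      have mp1 : MeasurePreserving (fun x : EuclideanSpace ℝ (Fin 2) => x - a) volume volume := by
        simpa [sub_eq_add_neg] using
          measurePreserving_add_right (volume : Measure (EuclideanSpace ℝ (Fin 2))) (-a)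
      exact clearance_psi_mp.comp (B.measurePreserving_repr.comp mp1)
    have hrepr : B.repr u = EuclideanSpace.single 0 1 := by
      rw [← hB0, B.repr_self]
    have key : ∀ (x : EuclideanSpace ℝ (Fin 2)) (t : ℝ),
        dist x (a + t • (b - a))
          = Real.sqrt ((B.repr (x - a) 0 - t * L) ^ 2 + (B.repr (x - a) 1) ^ 2) := by
      intro x t
      have h1 : x - (a + t • (b - a)) = (x - a) - t • (b - a) := by abel
      rw [dist_eq_norm, h1, ← B.repr.norm_map, map_sub, B.repr.map_smul]
      have h2 : B.repr (b - a) = L • EuclideanSpace.single 0 1 := by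
        rw [show b - a = L • u by rw [hu, smul_smul, mul_inv_cancel₀ hL.ne', one_smul],
          B.repr.map_smul, hrepr]
      rw [h2, smul_smul]
      rw [EuclideanSpace.norm_eq]
      congr 1
      rw [Fin.sum_univ_two]
      simp [EuclideanSpace.single_apply, mul_comm, sq_abs]
    have hpre : Metric.thickening r (segment ℝ a b)
        = Φ ⁻¹' {p : ℝ × ℝ | ∃ s ∈ Set.Icc (0:ℝ) L, (p.1 - s) ^ 2 + p.2 ^ 2 < r ^ 2} := by
      ext x
      rw [Set.mem_preimage, Metric.mem_thickening_iff, segment_eq_image']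
      simp only [Set.mem_image, Set.mem_setOf_eq]
      constructor
      · rintro ⟨z, ⟨t, ht, rfl⟩, hd⟩
        refine ⟨t * L, ⟨mul_nonneg ht.1 hL.le, ?_⟩, ?_⟩
        · calc t * L ≤ 1 * L := by gcongr; exact ht.2
            _ = L := one_mul L
        · exact (Real.sqrt_lt' hr).mp (by rw [← key x t]; exact hd)
      · rintro ⟨s, ⟨hs0, hsL⟩, hlt⟩
        refine ⟨a + (s / L) • (b - a), ⟨s / L, ⟨by positivity, by
          rw [div_le_one hL]; exact hsL⟩, rfl⟩, ?_⟩
        rw [key x (s / L), div_mul_cancel₀ _ hL.ne']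
        exact (Real.sqrt_lt' hr).mpr hlt
    rw [hpre, mpΦ.measure_preimage (clearance_hm_stadium r L).nullMeasurableSet,
      clearance_volume_stadium hr hL.le]

end ClearanceAux

/-- Conditional clearance probability: if `N` obstacle centers are drawn i.i.d. from the
uniform distribution on a set `S ⊆ ℝ²` of finite positive area containing the open
`r`-thickening of the segment `[a,b]`, then the probability that every center is at
distance at least `r` from the segment equals
`((μ(S) − π r² − 2 r ‖a − b‖)/μ(S))^N`. -/
theorem clearance_probability (S : Set (EuclideanSpace ℝ (Fin 2))) (hS : MeasurableSet S)
    (hS0 : 0 < volume S) (hStop : volume S < ⊤)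
    (a b : EuclideanSpace ℝ (Fin 2)) (r : ℝ) (hr : 0 < r)
    (hsub : Metric.thickening r (segment ℝ a b) ⊆ S)
    (N : ℕ) (hN : 0 < N) :
    Measure.pi (fun _ : Fin N => (volume S)⁻¹ • volume.restrict S)
        {ω : Fin N → EuclideanSpace ℝ (Fin 2) |
          ∀ j, r ≤ Metric.infDist (ω j) (segment ℝ a b)}
      = ENNReal.ofReal
          (((volume S).toReal - π * r ^ 2 - 2 * r * ‖a - b‖) / (volume S).toReal) ^ N := by
  set T := Metric.thickening r (segment ℝ a b) with hT
  set C := {x : EuclideanSpace ℝ (Fin 2) | r ≤ Metric.infDist x (segment ℝ a b)} with hC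
  have hCT : C = Tᶜ := by
    ext x
    simp only [hC, hT, Set.mem_setOf_eq, Set.mem_compl_iff,
      Metric.mem_thickening_iff_infDist_lt ⟨a, left_mem_segment ℝ a b⟩, not_lt]
  have hTopen : IsOpen T := Metric.isOpen_thickening
  have hCmeas : MeasurableSet C := by rw [hCT]; exact hTopen.measurableSet.compl
  set μ0 : Measure (EuclideanSpace ℝ (Fin 2)) := (volume S)⁻¹ • volume.restrict S with hμ0
  have hprob : IsProbabilityMeasure μ0 := by
    constructor
    rw [hμ0, Measure.smul_apply, Measure.restrict_apply MeasurableSet.univ, Set.univ_inter,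
      smul_eq_mul, ENNReal.inv_mul_cancel hS0.ne' hStop.ne]
  have hsetpi : {ω : Fin N → EuclideanSpace ℝ (Fin 2) |
      ∀ j, r ≤ Metric.infDist (ω j) (segment ℝ a b)}
      = Set.pi Set.univ (fun _ : Fin N => C) := by
    ext ω; simp [Set.mem_pi, hC]
  rw [hsetpi, Measure.pi_pi]
  have hvolT : volume T = ENNReal.ofReal (π * r ^ 2 + 2 * r * ‖a - b‖) := by
    rw [hT, clearance_volume_thickening_segment a b hr, norm_sub_rev]
  have hμ0C : μ0 C = ENNReal.ofReal
      (((volume S).toReal - π * r ^ 2 - 2 * r * ‖a - b‖) / (volume S).toReal) := by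
    have hCS : C ∩ S = S \ T := by
      rw [hCT]; ext x; simp only [Set.mem_inter_iff, Set.mem_compl_iff, Set.mem_diff]; tauto
    rw [hμ0, Measure.smul_apply, Measure.restrict_apply hCmeas, hCS, smul_eq_mul,
      measure_diff hsub hTopen.measurableSet.nullMeasurableSet (by rw [hvolT]; exact
        ENNReal.ofReal_ne_top)]
    set v : ℝ := (volume S).toReal with hv
    have hv0 : 0 < v := ENNReal.toReal_pos hS0.ne' hStop.ne
    set w : ℝ := π * r ^ 2 + 2 * r * ‖a - b‖ with hw
    have hw0 : 0 ≤ w := by positivity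
    have hwv : w ≤ v := by
      have h1 : volume T ≤ volume S := measure_mono hsub
      rw [hvolT, ← ENNReal.ofReal_toReal hStop.ne, ← hv] at h1
      exact (ENNReal.ofReal_le_ofReal_iff hv0.le).mp h1
    rw [show volume S = ENNReal.ofReal v from (ENNReal.ofReal_toReal hStop.ne).symm, hvolT,
      ← ENNReal.ofReal_sub v hw0, ← ENNReal.ofReal_inv_of_pos hv0,
      ← ENNReal.ofReal_mul (by positivity)]
    congr 1
    rw [hw]
    field_simp
    ring
  rw [hμ0C, Finset.prod_const, Finset.card_univ, Fintype.card_fin]
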